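/- arXiv:0806.1494 — 2 statements merged into one kernel-verified Lean document; each statement's English description precedes it below -/
import Mathlib

section
/- Let σ be a permutation of size n. In the whole genome duplication - random loss model, the minimum number of duplication-loss steps needed to obtain σ from the identity permutation 1 2 ... n equals ⌈log₂(desc(σ) + 1)⌉, where desc(σ)+1 is the number of maximal increasing substrings of σ. -/
/-- `σ` has a descent at (0-based) position `i`, i.e. `σ i > σ (i+1)`. -/
def IsDescentAt {n : ℕ} (σ : Equiv.Perm (Fin n)) (i : ℕ) : Prop :=
  ∃ h : i + 1 < n, σ ⟨i + 1, h⟩ < σ ⟨i, Nat.lt_of_succ_lt h⟩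

/-- The number of descents of `σ`. -/
noncomputable def descNum {n : ℕ} (σ : Equiv.Perm (Fin n)) : ℕ :=
  {i : ℕ | IsDescentAt σ i}.ncard

/-- One step of the whole genome duplication - random loss model. -/
def DLStep {n : ℕ} (σ σ' : Equiv.Perm (Fin n)) : Prop :=
  ∃ (m : ℕ) (τ : Equiv.Perm (Fin n)),
    (∀ i j : Fin n, (i : ℕ) < m → (j : ℕ) < m → i < j → τ i < τ j) ∧
    (∀ i j : Fin n, m ≤ (i : ℕ) → m ≤ (j : ℕ) → i < j → τ i < τ j) ∧
    ∀ i, σ' i = σ (τ i)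

/-- `σ` is obtainable from the identity permutation in at most `p` duplication-loss steps. -/
def ObtainableIn {n : ℕ} (p : ℕ) (σ : Equiv.Perm (Fin n)) : Prop :=
  ∃ (q : ℕ) (c : ℕ → Equiv.Perm (Fin n)), q ≤ p ∧ c 0 = 1 ∧ c q = σ ∧
    ∀ i, i < q → DLStep (c i) (c (i + 1))

open Classical in
noncomputable def descFin {n : ℕ} (σ : Equiv.Perm (Fin n)) : Finset ℕ :=
  (Finset.range n).filter (IsDescentAt σ)

lemma mem_descFin {n : ℕ} {σ : Equiv.Perm (Fin n)} {i : ℕ} :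
    i ∈ descFin σ ↔ IsDescentAt σ i := by
  classical
  simp only [descFin, Finset.mem_filter, Finset.mem_range]
  refine ⟨fun h => h.2, fun h => ⟨?_, h⟩⟩
  obtain ⟨h1, -⟩ := h
  omega

lemma descNum_eq {n : ℕ} (σ : Equiv.Perm (Fin n)) : descNum σ = (descFin σ).card := by
  have h : {i : ℕ | IsDescentAt σ i} = ↑(descFin σ) := by
    ext i; simp [mem_descFin]
  rw [descNum, h, Set.ncard_coe_finset]

lemma descNum_one {n : ℕ} : descNum (1 : Equiv.Perm (Fin n)) = 0 := by
  rw [descNum_eq, Finset.card_eq_zero, Finset.eq_empty_iff_forall_notMem]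
  intro i hi
  obtain ⟨h1, h2⟩ := mem_descFin.1 hi
  simp only [Equiv.Perm.one_apply] at h2
  exact absurd h2 (by simp [Fin.lt_def])

lemma le_of_no_descent {n : ℕ} (σ : Equiv.Perm (Fin n)) (a b : Fin n) (hab : a ≤ b)
    (h : ∀ j : ℕ, (a : ℕ) ≤ j → j < (b : ℕ) → ¬ IsDescentAt σ j) : σ a ≤ σ b := by
  obtain ⟨k, hk⟩ : ∃ k, (b : ℕ) = (a : ℕ) + k := ⟨b - a, by omega⟩
  clear hab
  induction k generalizing b with
  | zero =>
    have : a = b := Fin.ext (by omega)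
    subst this; exact le_rfl
  | succ k ih =>
    have hb' : (a : ℕ) + k < n := by have := b.isLt; omega
    have h1 : σ a ≤ σ ⟨(a : ℕ) + k, hb'⟩ :=
      ih ⟨(a : ℕ) + k, hb'⟩
        (fun j hj1 hj2 => h j hj1 (by simp only [Fin.val_mk] at hj2; omega)) rfl
    have h2 : ¬ IsDescentAt σ ((a : ℕ) + k) := h _ (by omega) (by omega)
    rw [IsDescentAt] at h2
    push_neg at h2
    have h3 := h2 (by omega)
    have hb : b = ⟨(a : ℕ) + k + 1, by omega⟩ := Fin.ext (by simp only [Fin.val_mk]; omega)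
    have hb2 : σ b = σ ⟨(a : ℕ) + k + 1, by omega⟩ := congrArg σ hb
    rw [hb2]
    exact le_trans h1 h3

lemma exists_descent_between {n : ℕ} (σ : Equiv.Perm (Fin n)) (a b : Fin n)
    (hab : a ≤ b) (hv : σ b < σ a) :
    ∃ j : ℕ, (a : ℕ) ≤ j ∧ j < (b : ℕ) ∧ IsDescentAt σ j := by
  by_contra hc
  push_neg at hc
  exact absurd (le_of_no_descent σ a b hab (fun j h1 h2 => hc j h1 h2)) (not_le.2 hv)

lemma eq_one_of_descNum_eq_zero {n : ℕ} (σ : Equiv.Perm (Fin n))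
    (h : descNum σ = 0) : σ = 1 := by
  have hD : ∀ i, ¬ IsDescentAt σ i := by
    intro i hi
    have h1 : i ∈ descFin σ := mem_descFin.2 hi
    rw [descNum_eq, Finset.card_eq_zero] at h
    rw [h] at h1
    exact absurd h1 (Finset.notMem_empty i)
  have hm : StrictMono ⇑σ := by
    intro a b hab
    have h1 : σ a ≤ σ b := le_of_no_descent σ a b hab.le (fun j _ _ => hD j)
    exact lt_of_le_of_ne h1 (fun he => absurd (σ.injective he) hab.ne)
  have hr : Set.range ⇑σ = Set.range (id : Fin n → Fin n) := by
    simp [σ.surjective.range_eq]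
  haveI : WellFoundedLT (Fin n) := inferInstance
  have h2 := (hm.range_inj (strictMono_id : StrictMono (id : Fin n → Fin n))).1 hr
  exact Equiv.ext fun x => by rw [show ⇑σ = id from h2]; rfl


lemma descNum_step_le {n : ℕ} (π σ : Equiv.Perm (Fin n)) (hst : DLStep π σ) :
    descNum σ + 1 ≤ 2 * (descNum π + 1) := by
  classical
  obtain ⟨m, τ, hlo, hhi, heq⟩ := hst
  set T : ℕ → ℕ := fun i => if h : i < n then (τ ⟨i, h⟩ : ℕ) else 0 with hT
  have hTval : ∀ (i : ℕ) (h : i < n), T i = (τ ⟨i, h⟩ : ℕ) := by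
    intro i h; rw [hT]; simp [h]
  set Q : ℕ → ℕ → Prop := fun i j => IsDescentAt π j ∧ T i ≤ j ∧ j < T (i + 1) with hQ
  set F : ℕ → ℕ := fun i => if h : ∃ j, Q i j then Classical.choose h else 0 with hF
  have hFspec : ∀ i, (∃ j, Q i j) → Q i (F i) := by
    intro i h
    rw [hF]; simp only [dif_pos h]
    exact Classical.choose_spec h
  have hwit : ∀ i ∈ descFin σ, ((i + 1 < m) ∨ (m ≤ i)) → ∃ j, Q i j := by
    intro i hi hblk
    obtain ⟨hi1, hi2⟩ := mem_descFin.1 hi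
    have hτ : τ ⟨i, Nat.lt_of_succ_lt hi1⟩ < τ ⟨i + 1, hi1⟩ := by
      rcases hblk with hb | hb
      · exact hlo _ _ (by simp; omega) (by simp; omega) (by simp [Fin.lt_def])
      · exact hhi _ _ (by simp; omega) (by simp; omega) (by simp [Fin.lt_def])
    have hv : π (τ ⟨i + 1, hi1⟩) < π (τ ⟨i, Nat.lt_of_succ_lt hi1⟩) := by
      rw [← heq, ← heq]; exact hi2
    obtain ⟨j, hj1, hj2, hj3⟩ := exists_descent_between π _ _ hτ.le hv
    refine ⟨j, hj3, ?_, ?_⟩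
    · rw [hTval i (Nat.lt_of_succ_lt hi1)]; exact hj1
    · rw [hTval (i + 1) hi1]; exact hj2
  have hinj : ∀ (D : Finset ℕ), D ⊆ descFin σ → (∀ i ∈ D, (i + 1 < m) ∨ (m ≤ i)) →
      (∀ i ∈ D, ∀ i' ∈ D, i < i' → T (i + 1) ≤ T i') →
      D.card ≤ descNum π := by
    intro D hsub hblk hmono
    rw [descNum_eq]
    apply Finset.card_le_card_of_injOn F
    · intro i hi
      exact mem_descFin.2 (hFspec i (hwit i (hsub hi) (hblk i hi))).1
    · intro i hi i' hi' hFe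
      by_contra hne
      have key : ∀ a b, a ∈ D → b ∈ D → a < b → F a < F b := by
        intro a b ha hb hab
        obtain ⟨-, -, hub⟩ := hFspec a (hwit a (hsub ha) (hblk a ha))
        obtain ⟨-, hlb, -⟩ := hFspec b (hwit b (hsub hb) (hblk b hb))
        have := hmono a ha b hb hab
        omega
      rcases Nat.lt_or_ge i i' with hlt | hge
      · exact absurd hFe (key i i' hi hi' hlt).ne
      · exact absurd hFe.symm (key i' i hi' hi (by omega)).ne
  -- now split descFin σ into the two blocks and the junction
  set D1 : Finset ℕ := (descFin σ).filter (fun i => i + 1 < m) with hD1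
  set D2 : Finset ℕ := (descFin σ).filter (fun i => m ≤ i) with hD2
  have hsplit : descFin σ ⊆ D1 ∪ D2 ∪ {m - 1} := by
    intro i hi
    simp only [hD1, hD2, Finset.mem_union, Finset.mem_filter, Finset.mem_singleton]
    by_cases h1 : i + 1 < m
    · exact Or.inl (Or.inl ⟨hi, h1⟩)
    · by_cases h2 : m ≤ i
      · exact Or.inl (Or.inr ⟨hi, h2⟩)
      · exact Or.inr (by omega)
  have hc1 : D1.card ≤ descNum π := by
    apply hinj D1 (Finset.filter_subset _ _)
    · intro i hi
      exact Or.inl (Finset.mem_filter.1 hi).2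
    · intro i hi i' hi' hii
      obtain ⟨hi0, him⟩ := Finset.mem_filter.1 hi
      obtain ⟨hi0', him'⟩ := Finset.mem_filter.1 hi'
      have hn1 : i + 1 < n := (mem_descFin.1 hi0).1
      have hn1' : i' < n := by have := (mem_descFin.1 hi0').1; omega
      rw [hTval (i + 1) hn1, hTval i' hn1']
      rcases Nat.lt_or_ge (i + 1) i' with hlt | hge
      · exact (hlo ⟨i + 1, hn1⟩ ⟨i', hn1'⟩ (by simp; omega)
          (by simp; omega) (by simpa [Fin.lt_def] using hlt)).le
      · have : i + 1 = i' := by omega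
        subst this; exact le_rfl
  have hc2 : D2.card ≤ descNum π := by
    apply hinj D2 (Finset.filter_subset _ _)
    · intro i hi
      exact Or.inr (Finset.mem_filter.1 hi).2
    · intro i hi i' hi' hii
      obtain ⟨hi0, him⟩ := Finset.mem_filter.1 hi
      obtain ⟨hi0', him'⟩ := Finset.mem_filter.1 hi'
      have hn1 : i + 1 < n := (mem_descFin.1 hi0).1
      have hn1' : i' < n := by have := (mem_descFin.1 hi0').1; omega
      rw [hTval (i + 1) hn1, hTval i' hn1']
      rcases Nat.lt_or_ge (i + 1) i' with hlt | hge
      · exact (hhi ⟨i + 1, hn1⟩ ⟨i', hn1'⟩ (by simp; omega)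
          (by simp; omega) (by simpa [Fin.lt_def] using hlt)).le
      · have : i + 1 = i' := by omega
        subst this; exact le_rfl
  have := Finset.card_le_card hsplit
  have h2 := (Finset.card_union_le (D1 ∪ D2) {m - 1})
  have h3 := (Finset.card_union_le D1 D2)
  have hfin : (descFin σ).card ≤ D1.card + D2.card + 1 := by
    simp only [Finset.card_singleton] at h2
    omega
  rw [descNum_eq]
  omega

lemma pow_of_obtainable {n p : ℕ} {σ : Equiv.Perm (Fin n)} (h : ObtainableIn p σ) :
    descNum σ + 1 ≤ 2 ^ p := by
  obtain ⟨q, c, hq, h0, hσ, hstep⟩ := h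
  have key : ∀ i, i ≤ q → descNum (c i) + 1 ≤ 2 ^ i := by
    intro i
    induction i with
    | zero => intro _; rw [h0, descNum_one]; norm_num
    | succ i ih =>
      intro hiq
      have h1 := ih (by omega)
      have h2 := descNum_step_le (c i) (c (i + 1)) (hstep i (by omega))
      calc descNum (c (i + 1)) + 1 ≤ 2 * (descNum (c i) + 1) := h2
        _ ≤ 2 * 2 ^ i := by omega
        _ = 2 ^ (i + 1) := by ring
  calc descNum σ + 1 = descNum (c q) + 1 := by rw [hσ]
    _ ≤ 2 ^ q := key q le_rfl
    _ ≤ 2 ^ p := Nat.pow_le_pow_right (by norm_num) hq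

lemma obtainable_mono {n p p' : ℕ} {σ : Equiv.Perm (Fin n)} (hpp : p ≤ p')
    (h : ObtainableIn p σ) : ObtainableIn p' σ := by
  obtain ⟨q, c, hq, h0, hσ, hstep⟩ := h
  exact ⟨q, c, hq.trans hpp, h0, hσ, hstep⟩

lemma obtainable_succ {n p : ℕ} {π σ : Equiv.Perm (Fin n)} (h : ObtainableIn p π)
    (hst : DLStep π σ) : ObtainableIn (p + 1) σ := by
  obtain ⟨q, c, hq, h0, hπ, hstep⟩ := h
  refine ⟨q + 1, fun i => if i ≤ q then c i else σ, by omega, by simp [h0], by simp, ?_⟩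
  intro i hi
  rcases Nat.lt_or_ge i q with h1 | h1
  · simpa [show i ≤ q by omega, show i + 1 ≤ q by omega] using hstep i h1
  · have : i = q := by omega
    subst this
    simpa [hπ] using hst

noncomputable def runIdx {n : ℕ} (σ : Equiv.Perm (Fin n)) (i : Fin n) : ℕ :=
  ((descFin σ).filter (fun k => k < (i : ℕ))).card

lemma runIdx_mono {n : ℕ} (σ : Equiv.Perm (Fin n)) {i j : Fin n} (hij : i ≤ j) :
    runIdx σ i ≤ runIdx σ j := by
  apply Finset.card_le_card
  intro x hx
  rw [Finset.mem_filter] at hx ⊢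
  have : (i : ℕ) ≤ (j : ℕ) := hij
  exact ⟨hx.1, by omega⟩

lemma runIdx_le {n : ℕ} (σ : Equiv.Perm (Fin n)) (i : Fin n) :
    runIdx σ i ≤ descNum σ := by
  rw [descNum_eq]
  exact Finset.card_le_card (Finset.filter_subset _ _)

lemma apply_lt_of_runIdx_eq {n : ℕ} (σ : Equiv.Perm (Fin n)) {i j : Fin n}
    (hij : i < j) (h : runIdx σ i = runIdx σ j) : σ i < σ j := by
  have hno : ∀ k : ℕ, (i : ℕ) ≤ k → k < (j : ℕ) → ¬ IsDescentAt σ k := by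
    intro k hk1 hk2 hd
    have hss : ((descFin σ).filter (fun x => x < (i : ℕ))) ⊂
        ((descFin σ).filter (fun x => x < (j : ℕ))) := by
      constructor
      · intro x hx
        rw [Finset.mem_filter] at hx ⊢
        have : (i : ℕ) ≤ (j : ℕ) := hij.le
        exact ⟨hx.1, by omega⟩
      · intro hcontra
        have hk : k ∈ (descFin σ).filter (fun x => x < (j : ℕ)) :=
          Finset.mem_filter.2 ⟨mem_descFin.2 hd, hk2⟩
        have := hcontra hk
        simp only [Finset.mem_filter] at this
        omega
    have hcard := Finset.card_lt_card hss
    unfold runIdx at h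
    omega
  have h1 := le_of_no_descent σ i j hij.le hno
  exact lt_of_le_of_ne h1 fun he => absurd (σ.injective he) hij.ne

lemma descNum_le_of_mono {n : ℕ} (π : Equiv.Perm (Fin n)) (hn : 0 < n) (h : Fin n → ℕ)
    (hmono : Monotone h)
    (hstep : ∀ k, IsDescentAt π k → ∀ (hk : k + 1 < n),
      h ⟨k, Nat.lt_of_succ_lt hk⟩ < h ⟨k + 1, hk⟩) :
    descNum π ≤ h ⟨n - 1, by omega⟩ - h ⟨0, hn⟩ := by
  classical
  rw [descNum_eq]
  set F : ℕ → ℕ := fun k => if hk : k + 1 < n then h ⟨k + 1, hk⟩ else 0 with hF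
  have hFval : ∀ (k : ℕ) (hk : k + 1 < n), F k = h ⟨k + 1, hk⟩ := by
    intro k hk; rw [hF]; simp [hk]
  have key : ∀ k ∈ descFin π, ∀ k' ∈ descFin π, k < k' → F k < F k' := by
    intro k hk k' hk' hkk
    obtain ⟨hk1, -⟩ := mem_descFin.1 hk
    have hd' := mem_descFin.1 hk'
    obtain ⟨hk1', -⟩ := id hd'
    rw [hFval k hk1, hFval k' hk1']
    calc h ⟨k + 1, hk1⟩ ≤ h ⟨k', Nat.lt_of_succ_lt hk1'⟩ := hmono (by simp [Fin.le_def]; omega)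
      _ < h ⟨k' + 1, hk1'⟩ := hstep k' hd' hk1'
  have hmaps : ∀ k ∈ descFin π, F k ∈ Finset.Ioc (h ⟨0, hn⟩) (h ⟨n - 1, by omega⟩) := by
    intro k hk
    have hd := mem_descFin.1 hk
    obtain ⟨hk1, -⟩ := id hd
    rw [Finset.mem_Ioc, hFval k hk1]
    constructor
    · calc h ⟨0, hn⟩ ≤ h ⟨k, Nat.lt_of_succ_lt hk1⟩ := hmono (by simp [Fin.le_def])
        _ < h ⟨k + 1, hk1⟩ := hstep k hd hk1
    · exact hmono (by simp [Fin.le_def]; omega)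
  have hinj : Set.InjOn F ↑(descFin π) := by
    intro k hk k' hk' hFe
    by_contra hne
    rcases Nat.lt_or_ge k k' with hlt | hge
    · exact absurd hFe (key k hk k' hk' hlt).ne
    · exact absurd hFe.symm (key k' hk' k hk (by omega)).ne
  have := Finset.card_le_card_of_injOn F hmaps hinj
  rwa [Nat.card_Ioc] at this

lemma halving {n : ℕ} (σ : Equiv.Perm (Fin n)) (hn : 0 < n) :
    ∃ π : Equiv.Perm (Fin n), DLStep π σ ∧ descNum π + 1 ≤ (descNum σ + 2) / 2 := by
  classical
  set d := descNum σ with hd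
  set e := (d + 2) / 2 with he
  have he1 : 1 ≤ e := by omega
  set g : Fin n → ℕ := fun i => if runIdx σ i < e then runIdx σ i else runIdx σ i - e with hg
  have hgval1 : ∀ i : Fin n, runIdx σ i < e → g i = runIdx σ i := by
    intro i h; rw [hg]; simp [h]
  have hgval2 : ∀ i : Fin n, e ≤ runIdx σ i → g i = runIdx σ i - e := by
    intro i h; rw [hg]; simp only []; rw [if_neg (by omega)]
  have hgle : ∀ i, g i ≤ e - 1 := by
    intro i
    have h1 : runIdx σ i ≤ d := runIdx_le σ i
    rcases Nat.lt_or_ge (runIdx σ i) e with h2 | h2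
    · rw [hgval1 i h2]; omega
    · rw [hgval2 i h2]; omega
  set κ : Fin n → ℕ := fun i => g i * n + (σ i : ℕ) with hκ
  have hκval : ∀ i, κ i = g i * n + (σ i : ℕ) := fun i => rfl
  have hκlt : ∀ i j : Fin n, (g i < g j ∨ (g i = g j ∧ σ i < σ j)) → κ i < κ j := by
    intro i j hij
    have h1 : (σ i : ℕ) < n := (σ i).isLt
    rw [hκval, hκval]
    rcases hij with h | ⟨h2, h3⟩
    · calc g i * n + (σ i : ℕ) < g i * n + n := by omega
        _ = (g i + 1) * n := by ring
        _ ≤ g j * n := Nat.mul_le_mul_right n (by omega)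
        _ ≤ g j * n + (σ j : ℕ) := Nat.le_add_right _ _
    · have h4 : (σ i : ℕ) < (σ j : ℕ) := h3
      rw [h2]; omega
  have hκinj : Function.Injective κ := by
    intro i j hij
    rw [hκval, hκval] at hij
    have h1 : (σ i : ℕ) < n := (σ i).isLt
    have h2 : (σ j : ℕ) < n := (σ j).isLt
    have h3 : (σ i : ℕ) = (σ j : ℕ) := by
      have h4 : ((σ i : ℕ) + g i * n) % n = ((σ j : ℕ) + g j * n) % n := by
        congr 1; omega
      rwa [Nat.add_mul_mod_self_right, Nat.add_mul_mod_self_right,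
        Nat.mod_eq_of_lt h1, Nat.mod_eq_of_lt h2] at h4
    exact σ.injective (Fin.ext h3)
  have hκg : ∀ i j : Fin n, κ i < κ j → g i ≤ g j := by
    intro i j h
    by_contra hc
    exact absurd (hκlt j i (Or.inl (by omega))) (by omega)
  have hκgs : ∀ i j : Fin n, κ i < κ j → σ j < σ i → g i < g j := by
    intro i j h hv
    rcases lt_or_eq_of_le (hκg i j h) with h2 | h2
    · exact h2
    · exact absurd (hκlt j i (Or.inr ⟨h2.symm, hv⟩)) (by omega)
  set ρ : Equiv.Perm (Fin n) := Tuple.sort κ with hρ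
  have hmonoκ : Monotone (κ ∘ ⇑ρ) := Tuple.monotone_sort κ
  have hsm : StrictMono (κ ∘ ⇑ρ) :=
    hmonoκ.strictMono_of_injective (hκinj.comp ρ.injective)
  have hord : ∀ i j : Fin n, κ i < κ j → ρ.symm i < ρ.symm j := by
    intro i j h
    have h2 := (hsm.lt_iff_lt (a := ρ.symm i) (b := ρ.symm j))
    rw [← h2]
    simpa using h
  set m : ℕ := ((Finset.univ : Finset (Fin n)).filter (fun i => runIdx σ i < e)).card with hm
  have hmem : ∀ i : Fin n, (i : ℕ) < m ↔ runIdx σ i < e := by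
    intro i
    constructor
    · intro h
      by_contra hc
      push_neg at hc
      have hsub : ((Finset.univ : Finset (Fin n)).filter (fun j => runIdx σ j < e)) ⊆
          Finset.Iio i := by
        intro j hj
        rw [Finset.mem_filter] at hj
        rw [Finset.mem_Iio]
        by_contra hji
        push_neg at hji
        exact absurd (runIdx_mono σ hji) (by omega)
      have hcard := Finset.card_le_card hsub
      rw [Fin.card_Iio] at hcard
      omega
    · intro h
      have hsub : Finset.Iic i ⊆
          ((Finset.univ : Finset (Fin n)).filter (fun j => runIdx σ j < e)) := by
        intro j hj
        rw [Finset.mem_Iic] at hj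
        rw [Finset.mem_filter]
        exact ⟨Finset.mem_univ j, lt_of_le_of_lt (runIdx_mono σ hj) h⟩
      have hcard := Finset.card_le_card hsub
      rw [Fin.card_Iic] at hcard
      omega
  refine ⟨σ * ρ, ⟨m, ρ.symm, ?_, ?_, ?_⟩, ?_⟩
  · -- first block
    intro i j hi hj hij
    rw [hmem i] at hi
    rw [hmem j] at hj
    apply hord
    have hle : runIdx σ i ≤ runIdx σ j := runIdx_mono σ hij.le
    rcases lt_or_eq_of_le hle with h2 | h2
    · apply hκlt; left; rw [hgval1 i hi, hgval1 j hj]; exact h2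
    · apply hκlt; right
      exact ⟨by rw [hgval1 i hi, hgval1 j hj, h2], apply_lt_of_runIdx_eq σ hij h2⟩
  · -- second block
    intro i j hi hj hij
    rw [← not_lt, hmem i] at hi
    rw [← not_lt, hmem j] at hj
    push_neg at hi hj
    apply hord
    have hle : runIdx σ i ≤ runIdx σ j := runIdx_mono σ hij.le
    rcases lt_or_eq_of_le hle with h2 | h2
    · apply hκlt; left; rw [hgval2 i hi, hgval2 j hj]; omega
    · apply hκlt; right
      exact ⟨by rw [hgval2 i hi, hgval2 j hj, h2], apply_lt_of_runIdx_eq σ hij h2⟩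
  · intro i
    simp [Equiv.Perm.mul_apply]
  · -- descent bound for π = σ * ρ
    set π := σ * ρ with hπ
    have hπval : ∀ x : Fin n, π x = σ (ρ x) := fun x => rfl
    set h : Fin n → ℕ := fun k => g (ρ k) with hh
    have hmonoh : Monotone h := by
      intro a b hab
      rcases lt_or_eq_of_le hab with h2 | h2
      · exact hκg _ _ (hsm h2)
      · rw [h2]
    have hsteph : ∀ k, IsDescentAt π k → ∀ (hk : k + 1 < n),
        h ⟨k, Nat.lt_of_succ_lt hk⟩ < h ⟨k + 1, hk⟩ := by
      intro k hdes hk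
      obtain ⟨hk', hlt⟩ := hdes
      have hlt' : σ (ρ ⟨k + 1, hk'⟩) < σ (ρ ⟨k, Nat.lt_of_succ_lt hk'⟩) := by
        rw [← hπval, ← hπval]; exact hlt
      have hκmk : κ (ρ ⟨k, Nat.lt_of_succ_lt hk⟩) < κ (ρ ⟨k + 1, hk⟩) :=
        hsm (by simp [Fin.lt_def])
      exact hκgs _ _ hκmk hlt'
    have hb := descNum_le_of_mono π hn h hmonoh hsteph
    have hb2 := hgle (ρ ⟨n - 1, by omega⟩)
    have hb3 : h ⟨n - 1, by omega⟩ ≤ e - 1 := hb2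
    omega

lemma obtainable_of_le_pow {n : ℕ} :
    ∀ (p : ℕ) (σ : Equiv.Perm (Fin n)), descNum σ + 1 ≤ 2 ^ p → ObtainableIn p σ := by
  intro p
  induction p with
  | zero =>
    intro σ h
    have h0 : descNum σ = 0 := by simp at h; omega
    have := eq_one_of_descNum_eq_zero σ h0
    subst this
    exact ⟨0, fun _ => 1, le_rfl, rfl, rfl, fun i hi => absurd hi (by omega)⟩
  | succ p ih =>
    intro σ h
    by_cases h0 : descNum σ = 0
    · have := eq_one_of_descNum_eq_zero σ h0
      subst this
      exact ⟨0, fun _ => 1, by omega, rfl, rfl, fun i hi => absurd hi (by omega)⟩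
    · have hn : 0 < n := by
        have hpos : 0 < (descFin σ).card := by rw [← descNum_eq]; omega
        obtain ⟨i, hi⟩ := Finset.card_pos.1 hpos
        obtain ⟨h1, -⟩ := mem_descFin.1 hi
        omega
      obtain ⟨π, hst, hb⟩ := halving σ hn
      have hπ : descNum π + 1 ≤ 2 ^ p := by
        have h2 : (2 : ℕ) ^ (p + 1) = 2 * 2 ^ p := by ring
        rw [h2] at h
        omega
      exact obtainable_succ (ih π hπ) hst


/-- In the whole genome duplication - random loss model, the minimum number of steps
needed to obtain `σ` from the identity is `⌈log₂ (desc σ + 1)⌉`, where `desc σ + 1` is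
the number of maximal increasing substrings of `σ`. -/
theorem min_steps_eq_clog {n : ℕ} (σ : Equiv.Perm (Fin n)) :
    IsLeast {p : ℕ | ObtainableIn p σ} (Nat.clog 2 (descNum σ + 1)) := by
  constructor
  · exact obtainable_of_le_pow _ σ (Nat.le_pow_clog (by norm_num) _)
  · intro p hp
    exact (Nat.clog_le_iff_le_pow (by norm_num)).2 (pow_of_obtainable hp)
end

section
/- Let d ≥ 1 and let σ be a minimal permutation with d descents of size 2d. Then σ alternates isolated descents and isolated ascents, starting and ending with a descent: σ has a descent at position i if and only if i is odd (1 ≤ i ≤ 2d−1), and an ascent at position i if and only if i is even (2 ≤ i ≤ 2d−2). -/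
/-- `π` is a pattern of `σ` (written `π ≺ σ`). -/
def IsPattern {k n : ℕ} (π : Equiv.Perm (Fin k)) (σ : Equiv.Perm (Fin n)) : Prop :=
  ∃ f : Fin k ↪o Fin n, ∀ ℓ m : Fin k, π ℓ < π m → σ (f ℓ) < σ (f m)

/-- `σ` is a minimal permutation with `d` descents: it has `d` descents and every
pattern `π ≺ σ` with `π ≠ σ` (equivalently, of strictly smaller size) has fewer
than `d` descents. -/
def MinimalWithDescents (d : ℕ) {n : ℕ} (σ : Equiv.Perm (Fin n)) : Prop :=
  descNum σ = d ∧
    ∀ (k : ℕ) (π : Equiv.Perm (Fin k)), k < n → IsPattern π σ → descNum π < d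

/-! ### Auxiliary definitions and lemmas -/

/-- `σ` has an ascent at (0-based) position `i`. -/
def IsAscentAt {n : ℕ} (σ : Equiv.Perm (Fin n)) (i : ℕ) : Prop :=
  ∃ h : i + 1 < n, σ ⟨i, Nat.lt_of_succ_lt h⟩ < σ ⟨i + 1, h⟩

lemma isAscentAt_of_not_descent {n : ℕ} (σ : Equiv.Perm (Fin n)) (i : ℕ)
    (hi : i + 1 < n) (h : ¬ IsDescentAt σ i) : IsAscentAt σ i := by
  refine ⟨hi, ?_⟩
  rcases lt_trichotomy (σ ⟨i, Nat.lt_of_succ_lt hi⟩) (σ ⟨i + 1, hi⟩) with h' | h' | h'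
  · exact h'
  · exact absurd (σ.injective h') (by intro hc; have := congrArg Fin.val hc; simp at this)
  · exact absurd ⟨hi, h'⟩ h

lemma not_descent_of_ascent {n : ℕ} (σ : Equiv.Perm (Fin n)) (i : ℕ)
    (h : IsAscentAt σ i) : ¬ IsDescentAt σ i := by
  rintro ⟨hd1, hd2⟩
  obtain ⟨ha1, ha2⟩ := h
  exact absurd hd2 (not_lt.mpr (le_of_lt ha2))

lemma val_succAbove {n : ℕ} (p : Fin (n+1)) (i : Fin n) :
    (p.succAbove i).val = if i.val < p.val then i.val else i.val + 1 := by
  rcases lt_or_ge (Fin.castSucc i) p with h | h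
  · rw [Fin.succAbove_of_castSucc_lt _ _ h, if_pos (by simpa [Fin.lt_def] using h)]
    rfl
  · rw [Fin.succAbove_of_le_castSucc _ _ h,
      if_neg (by simpa [Fin.le_def, not_lt] using h)]
    rfl

section Del
variable {N : ℕ} (σ : Equiv.Perm (Fin (N+1))) (j : Fin (N+1))

/-- The values of `σ` off position `j`. -/
def delv (ℓ : Fin N) : Fin (N+1) := σ (j.succAbove ℓ)

lemma delv_injective : Function.Injective (delv σ j) :=
  σ.injective.comp (Fin.succAbove_right_injective)

/-- The standardization of the values of `σ` off position `j`: the rank of the value. -/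
def delVal (ℓ : Fin N) : ℕ :=
  (Finset.univ.filter (fun m => delv σ j m < delv σ j ℓ)).card

lemma delVal_lt_of_lt {a b : Fin N} (h : delv σ j a < delv σ j b) :
    delVal σ j a < delVal σ j b := by
  apply Finset.card_lt_card
  constructor
  · intro m hm
    simp only [Finset.mem_filter, Finset.mem_univ, true_and] at hm ⊢
    exact lt_trans hm h
  · intro hsub
    have := hsub (Finset.mem_filter.mpr ⟨Finset.mem_univ a, h⟩)
    simp at this

lemma delVal_lt_iff {a b : Fin N} :
    delVal σ j a < delVal σ j b ↔ delv σ j a < delv σ j b := by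
  constructor
  · intro h
    rcases lt_trichotomy (delv σ j a) (delv σ j b) with h' | h' | h'
    · exact h'
    · exact absurd (delv_injective σ j h') (by rintro rfl; exact lt_irrefl _ h)
    · exact absurd (delVal_lt_of_lt σ j h') (by omega)
  · exact delVal_lt_of_lt σ j

lemma delVal_lt_N (ℓ : Fin N) : delVal σ j ℓ < N := by
  have h1 : (Finset.univ.filter (fun m => delv σ j m < delv σ j ℓ)) ⊂ Finset.univ := by
    refine Finset.ssubset_univ_iff.mpr ?_
    intro he
    have := he ▸ Finset.mem_univ ℓ
    simp at this
  simpa [delVal] using Finset.card_lt_card h1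

/-- The pattern of `σ` obtained by deleting position `j`. -/
noncomputable def delPerm : Equiv.Perm (Fin N) :=
  Equiv.ofBijective (fun ℓ => (⟨delVal σ j ℓ, delVal_lt_N σ j ℓ⟩ : Fin N))
    (Finite.injective_iff_bijective.mp (by
      intro a b hab
      have : delVal σ j a = delVal σ j b := congrArg Fin.val hab
      by_contra hne
      rcases lt_trichotomy (delv σ j a) (delv σ j b) with h' | h' | h'
      · have := delVal_lt_of_lt σ j h'; omega
      · exact hne (delv_injective σ j h')
      · have := delVal_lt_of_lt σ j h'; omega))

lemma delPerm_lt_iff {a b : Fin N} :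
    delPerm σ j a < delPerm σ j b ↔ delv σ j a < delv σ j b := by
  rw [← delVal_lt_iff σ j]
  rfl

lemma isPattern_delPerm : IsPattern (delPerm σ j) σ := by
  refine ⟨Fin.succAboveOrderEmb j, fun ℓ m h => ?_⟩
  have := (delPerm_lt_iff σ j).mp h
  simpa [delv, Fin.succAboveOrderEmb] using this

lemma isDescentAt_delPerm_iff (i : ℕ) :
    IsDescentAt (delPerm σ j) i ↔
      ∃ h : i + 1 < N, delv σ j ⟨i+1, h⟩ < delv σ j ⟨i, Nat.lt_of_succ_lt h⟩ := by
  unfold IsDescentAt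
  constructor
  · rintro ⟨h, hlt⟩
    exact ⟨h, (delPerm_lt_iff σ j).mp hlt⟩
  · rintro ⟨h, hlt⟩
    exact ⟨h, (delPerm_lt_iff σ j).mpr hlt⟩

lemma delv_val_lt (ℓ : Fin N) (h : ℓ.val < j.val) :
    delv σ j ℓ = σ ⟨ℓ.val, Nat.lt_of_lt_of_le h (Nat.le_of_lt_succ (Nat.lt_succ_of_lt j.isLt))⟩ := by
  unfold delv
  congr 1
  apply Fin.ext
  rw [val_succAbove, if_pos h]

lemma delv_val_ge (ℓ : Fin N) (h : ¬ ℓ.val < j.val) :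
    delv σ j ℓ = σ ⟨ℓ.val + 1, Nat.succ_lt_succ ℓ.isLt⟩ := by
  unfold delv
  congr 1
  apply Fin.ext
  rw [val_succAbove, if_neg h]

lemma key_iff
    (Ha : j.val < N → IsAscentAt σ j.val)
    (Hb : ∀ k, k + 1 = j.val → IsAscentAt σ k) (i : ℕ) :
    IsDescentAt (delPerm σ j) i ↔ IsDescentAt σ (if i < j.val then i else i + 1) := by
  rw [isDescentAt_delPerm_iff]
  by_cases hij : i < j.val
  · rw [if_pos hij]
    by_cases hij2 : i + 1 < j.val
    · -- both indices below j
      have hiN : i + 1 < N := by omega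
      constructor
      · rintro ⟨h, hlt⟩
        rw [delv_val_lt σ j _ hij2, delv_val_lt σ j _ (by simpa using hij)] at hlt
        exact ⟨by omega, hlt⟩
      · rintro ⟨h, hlt⟩
        refine ⟨hiN, ?_⟩
        rw [delv_val_lt σ j ⟨i+1, hiN⟩ hij2, delv_val_lt σ j ⟨i, by omega⟩ (by simpa using hij)]
        exact hlt
    · -- i = j.val - 1 : both sides false
      have hji : i + 1 = j.val := by omega
      obtain ⟨hb1, hb2⟩ := Hb i hji
      constructor
      · rintro ⟨h, hlt⟩
        exfalso
        have hjN : j.val < N := by omega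
        obtain ⟨ha1, ha2⟩ := Ha hjN
        rw [delv_val_lt σ j ⟨i, by omega⟩ (by simpa using hij),
            delv_val_ge σ j ⟨i+1, h⟩ (by simp; omega)] at hlt
        have e1 : σ ⟨i, by omega⟩ < σ ⟨i+1, by omega⟩ := hb2
        have e2 : σ ⟨i+1, by omega⟩ < σ ⟨i+1+1, by omega⟩ := by
          have := ha2
          have h1 : (⟨j.val, Nat.lt_of_succ_lt ha1⟩ : Fin (N+1)) = ⟨i+1, by omega⟩ := by
            apply Fin.ext; simp [← hji]
          have h2 : (⟨j.val+1, ha1⟩ : Fin (N+1)) = ⟨i+1+1, by omega⟩ := by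
            apply Fin.ext; simp [← hji]
          rwa [h1, h2] at this
        have : σ ⟨i, by omega⟩ < σ ⟨i+1+1, by omega⟩ := lt_trans e1 e2
        exact absurd hlt (not_lt.mpr (le_of_lt this))
      · rintro ⟨h, hlt⟩
        exact absurd hlt (not_lt.mpr (le_of_lt hb2))
  · rw [if_neg hij]
    constructor
    · rintro ⟨h, hlt⟩
      rw [delv_val_ge σ j ⟨i+1, h⟩ (by simp; omega),
        delv_val_ge σ j ⟨i, by omega⟩ (by simpa using hij)] at hlt
      exact ⟨by omega, hlt⟩
    · rintro ⟨h, hlt⟩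
      have hiN : i + 1 < N := by omega
      refine ⟨hiN, ?_⟩
      rw [delv_val_ge σ j ⟨i+1, hiN⟩ (by simp; omega),
        delv_val_ge σ j ⟨i, by omega⟩ (by simpa using hij)]
      exact hlt

lemma descNum_delPerm
    (Ha : j.val < N → IsAscentAt σ j.val)
    (Hb : ∀ k, k + 1 = j.val → IsAscentAt σ k) :
    descNum (delPerm σ j) = descNum σ := by
  have key := key_iff σ j Ha Hb
  have hset : {i : ℕ | IsDescentAt σ i} =
      (fun i => if i < j.val then i else i + 1) '' {i : ℕ | IsDescentAt (delPerm σ j) i} := by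
    ext k
    simp only [Set.mem_setOf_eq, Set.mem_image]
    constructor
    · intro hk
      by_cases hkj : k < j.val
      · exact ⟨k, (key k).mpr (by rwa [if_pos hkj]), if_pos hkj⟩
      · rcases Nat.eq_or_lt_of_le (not_lt.mp hkj) with heq | hlt
        · exfalso
          obtain ⟨h, hlt'⟩ := hk
          obtain ⟨ha1, ha2⟩ := Ha (by omega)
          have h1 : (⟨j.val, Nat.lt_of_succ_lt ha1⟩ : Fin (N+1)) = ⟨k, Nat.lt_of_succ_lt h⟩ := by
            apply Fin.ext; simp [heq]
          have h2 : (⟨j.val + 1, ha1⟩ : Fin (N+1)) = ⟨k+1, h⟩ := by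
            apply Fin.ext; simp [heq]
          rw [h1, h2] at ha2
          exact absurd hlt' (not_lt.mpr (le_of_lt ha2))
        · refine ⟨k - 1, (key (k-1)).mpr ?_, ?_⟩
          · rw [if_neg (by omega)]
            have : k - 1 + 1 = k := by omega
            rwa [this]
          · rw [if_neg (by omega)]; omega
    · rintro ⟨i, hi, rfl⟩
      exact (key i).mp hi
  have einj : Function.Injective (fun i => if i < j.val then i else i + 1) := by
    intro a b hab
    simp only at hab
    split_ifs at hab <;> omega
  rw [descNum, descNum, hset, Set.ncard_image_of_injective _ einj]

end Del

/-- The purely combinatorial counting argument: a subset of `{0, …, N-1}` of size `d`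
(with `N + 1 = 2d`) containing `0` and `N - 1`, whose complement has no two adjacent
elements, is exactly the set of even numbers below `N`. -/
lemma counting (d N : ℕ) (hd : 1 ≤ d) (hN : N + 1 = 2 * d) (T : Set ℕ)
    (hcard : T.ncard = d) (hsub : ∀ i ∈ T, i < N)
    (h0 : 0 ∈ T) (hlast : N - 1 ∈ T)
    (hAA : ∀ k, k + 2 ≤ N → k ∈ T ∨ k + 1 ∈ T) :
    ∀ i < N, (i ∈ T ↔ Even i) := by
  classical
  have hTfin : T.Finite := Set.Finite.subset (Finset.range N).finite_toSet
    (fun i hi => by simpa using hsub i hi)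
  set TF := hTfin.toFinset with hTF
  have hmemT : ∀ i, i ∈ TF ↔ i ∈ T := fun i => hTfin.mem_toFinset
  have hTFcard : TF.card = d := by
    rw [← hcard]
    have : T = ↑TF := by ext i; simp [hmemT i]
    rw [this, Set.ncard_coe_finset]
  set A : Finset ℕ := (Finset.range N) \ TF with hA
  have hAcard : A.card = d - 1 := by
    rw [hA, Finset.card_sdiff_of_subset (fun i hi => by
      simpa using hsub i ((hmemT i).mp hi))]
    rw [hTFcard, Finset.card_range]
    omega
  have hAmem : ∀ a, a ∈ A ↔ a < N ∧ a ∉ T := by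
    intro a; simp [hA, hmemT]
  have hA1 : ∀ a ∈ A, 1 ≤ a ∧ a + 2 ≤ N := by
    intro a ha
    rw [hAmem] at ha
    constructor
    · rcases Nat.eq_zero_or_pos a with rfl | h
      · exact absurd h0 ha.2
      · exact h
    · rcases Nat.lt_or_ge (a+2) (N+1) with h | h
      · omega
      · exfalso
        have : a = N - 1 := by omega
        exact ha.2 (this ▸ hlast)
  have hAadj : ∀ a ∈ A, a + 1 ∉ A := by
    intro a ha ha1
    rw [hAmem] at ha ha1
    rcases hAA a (by have := hA1 a (by rw [hAmem]; exact ha); omega) with h | h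
    · exact ha.2 h
    · exact ha1.2 h
  have hinj : Set.InjOn (fun a => (a - 1) / 2) A := by
    intro a ha b hb hab
    simp only at hab
    have ha' := hA1 a ha
    have hb' := hA1 b hb
    by_contra hne
    rcases Nat.lt_or_ge a b with h | h
    · have : b = a + 1 := by omega
      exact hAadj a ha (this ▸ hb)
    · have : a = b + 1 := by omega
      exact hAadj b hb (this ▸ ha)
  have himsub : A.image (fun a => (a - 1) / 2) ⊆ Finset.range (d - 1) := by
    intro k hk
    simp only [Finset.mem_image] at hk
    obtain ⟨a, ha, rfl⟩ := hk
    have := hA1 a ha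
    simp only [Finset.mem_range]
    omega
  have himeq : A.image (fun a => (a - 1) / 2) = Finset.range (d - 1) := by
    apply Finset.eq_of_subset_of_card_le himsub
    rw [Finset.card_image_of_injOn hinj, hAcard, Finset.card_range]
  have hsurj : ∀ k < d - 1, ∃ a ∈ A, (a - 1) / 2 = k := by
    intro k hk
    have : k ∈ A.image (fun a => (a - 1) / 2) := by
      rw [himeq]; simpa using hk
    simpa using this
  have hodd : ∀ m k, k < d - 1 → k + m = d - 2 → 2 * k + 1 ∈ A := by
    intro m
    induction m with
    | zero =>
      intro k hk hkm
      obtain ⟨a, ha, hψ⟩ := hsurj k hk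
      have h1 := hA1 a ha
      have : a = 2 * k + 1 ∨ a = 2 * k + 2 := by omega
      rcases this with rfl | rfl
      · exact ha
      · exfalso
        have : (2 * k + 2) = N - 1 := by omega
        rw [hAmem] at ha
        exact ha.2 (this ▸ hlast)
    | succ m ih =>
      intro k hk hkm
      have h3 : 2 * (k+1) + 1 ∈ A := ih (k+1) (by omega) (by omega)
      obtain ⟨a, ha, hψ⟩ := hsurj k hk
      have h1 := hA1 a ha
      have : a = 2 * k + 1 ∨ a = 2 * k + 2 := by omega
      rcases this with rfl | rfl
      · exact ha
      · exfalso
        have : 2 * k + 2 + 1 = 2 * (k + 1) + 1 := by ring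
        exact hAadj _ ha (this ▸ h3)
  have hodds_sub : (Finset.range (d-1)).image (fun k => 2 * k + 1) ⊆ A := by
    intro a ha
    simp only [Finset.mem_image, Finset.mem_range] at ha
    obtain ⟨k, hk, rfl⟩ := ha
    exact hodd (d - 2 - k) k hk (by omega)
  have hAeq : A = (Finset.range (d-1)).image (fun k => 2 * k + 1) := by
    apply (Finset.eq_of_subset_of_card_le hodds_sub ?_).symm
    rw [hAcard, Finset.card_image_of_injective _ (fun a b hab => by omega),
      Finset.card_range]
  intro i hi
  have hiA : i ∈ A ↔ Odd i ∧ i + 2 ≤ N := by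
    rw [hAeq]
    simp only [Finset.mem_image, Finset.mem_range]
    constructor
    · rintro ⟨k, hk, rfl⟩
      exact ⟨⟨k, by omega⟩, by omega⟩
    · rintro ⟨⟨k, hk⟩, h2⟩
      exact ⟨k, by omega, by omega⟩
  have hiT : i ∈ T ↔ i ∉ A := by
    rw [hAmem]
    constructor
    · intro h hc; exact hc.2 h
    · intro h
      by_contra hc
      exact h ⟨hi, hc⟩
  rw [hiT, hiA]
  rw [Nat.odd_iff, Nat.even_iff]
  omega

/-- Main auxiliary theorem, stated with the size as a variable so we can case on it. -/
theorem aux_alternates (d : ℕ) (hd : 1 ≤ d) (n : ℕ) (hn : n = 2 * d) :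
    ∀ σ : Equiv.Perm (Fin n), MinimalWithDescents d σ →
      ∀ (i : ℕ) (hi : i + 1 < n),
        (σ ⟨i + 1, hi⟩ < σ ⟨i, Nat.lt_of_succ_lt hi⟩ ↔ Even i) ∧
        (σ ⟨i, Nat.lt_of_succ_lt hi⟩ < σ ⟨i + 1, hi⟩ ↔ Odd i) := by
  cases n with
  | zero => omega
  | succ N =>
    intro σ hσ
    have hN : N + 1 = 2 * d := hn
    have hN1 : 1 ≤ N := by omega
    -- deleting a position whose surroundings are ascents contradicts minimality
    have hdel : ∀ j : Fin (N+1),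
        (j.val < N → IsAscentAt σ j.val) →
        (∀ k, k + 1 = j.val → IsAscentAt σ k) → False := by
      intro j Ha Hb
      have h1 : descNum (delPerm σ j) = d := by
        rw [descNum_delPerm σ j Ha Hb, hσ.1]
      have h2 := hσ.2 N (delPerm σ j) (by omega) (isPattern_delPerm σ j)
      omega
    -- descent at 0
    have hD0 : IsDescentAt σ 0 := by
      by_contra hc
      refine hdel ⟨0, by omega⟩ ?_ ?_
      · intro _
        rw [Fin.val_mk]
        exact isAscentAt_of_not_descent σ 0 (by omega) hc
      · intro k hk
        rw [Fin.val_mk] at hk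
        omega
    -- descent at N - 1
    have hDlast : IsDescentAt σ (N - 1) := by
      by_contra hc
      refine hdel ⟨N, by omega⟩ ?_ ?_
      · intro hlt
        rw [Fin.val_mk] at hlt
        omega
      · intro k hk
        rw [Fin.val_mk] at hk
        have : k = N - 1 := by omega
        subst this
        exact isAscentAt_of_not_descent σ (N-1) (by omega) hc
    -- no two consecutive ascents
    have hAA : ∀ k, k + 2 ≤ N → IsDescentAt σ k ∨ IsDescentAt σ (k+1) := by
      intro k hk
      by_contra hc
      push_neg at hc
      refine hdel ⟨k + 1, by omega⟩ ?_ ?_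
      · intro hlt
        rw [Fin.val_mk]
        exact isAscentAt_of_not_descent σ (k+1) (by omega) hc.2
      · intro k' hk'
        rw [Fin.val_mk] at hk'
        have hkk : k' = k := by omega
        rw [hkk]
        exact isAscentAt_of_not_descent σ k (by omega) hc.1
    have hcnt := counting d N hd hN {i | IsDescentAt σ i} hσ.1
      (fun i hi => by obtain ⟨h, _⟩ := hi; omega) hD0 hDlast hAA
    intro i hi
    have hiN : i < N := by omega
    have hmem : i ∈ {i | IsDescentAt σ i} ↔ Even i := hcnt i hiN
    have hdesc : (σ ⟨i + 1, hi⟩ < σ ⟨i, Nat.lt_of_succ_lt hi⟩) ↔ IsDescentAt σ i := by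
      constructor
      · intro h; exact ⟨hi, h⟩
      · rintro ⟨h', hlt⟩; exact hlt
    constructor
    · rw [hdesc]; exact hmem
    · constructor
      · intro hasc
        rw [Nat.odd_iff, ← Nat.not_even_iff]
        intro hev
        have : IsDescentAt σ i := hmem.mpr hev
        exact not_descent_of_ascent σ i ⟨hi, hasc⟩ this
      · intro hoddi
        have hnd : ¬ IsDescentAt σ i := by
          intro hdi
          have := hmem.mp hdi
          rw [Nat.even_iff] at this
          rw [Nat.odd_iff] at hoddi
          omega
        obtain ⟨h', hlt⟩ := isAscentAt_of_not_descent σ i hi hnd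
        exact hlt

/-- A minimal permutation with `d` descents of (maximal) size `2d` alternates isolated
descents and isolated ascents, starting and ending with a descent: in 0-based indexing,
there is a descent at position `i` iff `i` is even, and an ascent at position `i` iff
`i` is odd (positions `i` with `i + 1 < 2d`; 0-based even positions are the paper's odd
1-based positions `1, 3, …, 2d - 1`). -/
theorem minimal_of_size_two_mul_alternates (d : ℕ) (hd : 1 ≤ d)
    (σ : Equiv.Perm (Fin (2 * d))) (h : MinimalWithDescents d σ) :
    ∀ (i : ℕ) (hi : i + 1 < 2 * d),
      (σ ⟨i + 1, hi⟩ < σ ⟨i, Nat.lt_of_succ_lt hi⟩ ↔ Even i) ∧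
      (σ ⟨i, Nat.lt_of_succ_lt hi⟩ < σ ⟨i + 1, hi⟩ ↔ Odd i) := by
  exact aux_alternates d hd (2 * d) rfl σ h
end
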